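/- arXiv:2507.03966 — 6 statements merged into one kernel-verified Lean document; each statement's English description precedes it below -/
import Mathlib

section
/- Let c ∈ (−√2, √2) and β = √(2 − c²). For every twice continuously differentiable function f : ℝ → ℝ and every x ∈ ℝ, one has S_c*(S_c f)(x) = −f''(x) + β²·f(x) − 3·Q_c(x)·f(x); that is, the factorization identity L_+ = S_c* ∘ S_c holds. -/
open Real

/-- The real part of the traveling-wave profile. -/
noncomputable def Rc (c x : ℝ) : ℝ :=
  Real.sqrt ((2 - c ^ 2) / 2) * Real.tanh (Real.sqrt (2 - c ^ 2) * x / 2)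

/-- The soliton profile `Q_c(x) = (β²/2) sech²(βx/2)` with `β = √(2 - c²)`. -/
noncomputable def Q (c x : ℝ) : ℝ :=
  (Real.sqrt (2 - c ^ 2)) ^ 2 / 2
    * ((Real.cosh (Real.sqrt (2 - c ^ 2) * x / 2))⁻¹) ^ 2

/-- The operator `S_c f = f' + √2 R_c f`. -/
noncomputable def Sc (c : ℝ) (f : ℝ → ℝ) (x : ℝ) : ℝ :=
  deriv f x + Real.sqrt 2 * Rc c x * f x

/-- The operator `S_c* f = -f' + √2 R_c f`. -/
noncomputable def Sst (c : ℝ) (f : ℝ → ℝ) (x : ℝ) : ℝ :=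
  -deriv f x + Real.sqrt 2 * Rc c x * f x

lemma hasDerivAt_Rc (c x : ℝ) :
    HasDerivAt (Rc c)
      (Real.sqrt ((2 - c ^ 2) / 2) * (Real.sqrt (2 - c ^ 2) / 2)
        * ((Real.cosh (Real.sqrt (2 - c ^ 2) * x / 2))⁻¹) ^ 2) x := by
  set b := Real.sqrt (2 - c ^ 2)
  have hu : HasDerivAt (fun y : ℝ => b * y / 2) (b / 2) x := by
    simpa using (((hasDerivAt_id x).const_mul b).div_const 2)
  have hs : HasDerivAt (fun y : ℝ => Real.sinh (b * y / 2))
      (Real.cosh (b * x / 2) * (b / 2)) x := (Real.hasDerivAt_sinh _).comp x hu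
  have hch : HasDerivAt (fun y : ℝ => Real.cosh (b * y / 2))
      (Real.sinh (b * x / 2) * (b / 2)) x := (Real.hasDerivAt_cosh _).comp x hu
  have hcne : Real.cosh (b * x / 2) ≠ 0 := (Real.cosh_pos _).ne'
  have hdiv := hs.div hch hcne
  have hid : Real.cosh (b * x / 2) ^ 2 - Real.sinh (b * x / 2) ^ 2 = 1 :=
    Real.cosh_sq_sub_sinh_sq _
  have key : HasDerivAt (fun y : ℝ => Real.tanh (b * y / 2))
      ((b / 2) * ((Real.cosh (b * x / 2))⁻¹) ^ 2) x := by
    have heq : (fun y : ℝ => Real.tanh (b * y / 2))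
        = fun y : ℝ => Real.sinh (b * y / 2) / Real.cosh (b * y / 2) := by
      funext y; rw [Real.tanh_eq_sinh_div_cosh]
    rw [heq]
    refine hdiv.congr_deriv ?_
    have hnum : Real.cosh (b * x / 2) * (b / 2) * Real.cosh (b * x / 2)
        - Real.sinh (b * x / 2) * (Real.sinh (b * x / 2) * (b / 2)) = b / 2 := by
      linear_combination (b / 2) * hid
    rw [hnum, inv_pow]
    exact div_eq_mul_inv _ _
  have := key.const_mul (Real.sqrt ((2 - c ^ 2) / 2))
  refine this.congr_deriv ?_
  ring

/-- Factorization identity `L₊ = S_c* ∘ S_c`: for `f` of class `C²`,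
`S_c*(S_c f) = -f'' + β² f - 3 Q_c f`. -/
theorem Lplus_factorization (c : ℝ)
    (hc : c ∈ Set.Ioo (-Real.sqrt 2) (Real.sqrt 2))
    (f : ℝ → ℝ) (hf : ContDiff ℝ 2 f) (x : ℝ) :
    Sst c (Sc c f) x
      = -deriv (deriv f) x + (Real.sqrt (2 - c ^ 2)) ^ 2 * f x
        - 3 * Q c x * f x := by
  have h2c : 0 < 2 - c ^ 2 := by
    have habs : |c| < Real.sqrt 2 := abs_lt.mpr ⟨hc.1, hc.2⟩
    have : c ^ 2 < Real.sqrt 2 ^ 2 := by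
      rw [← sq_abs]; exact pow_lt_pow_left₀ habs (abs_nonneg c) (by norm_num)
    rw [Real.sq_sqrt (by norm_num : (0:ℝ) ≤ 2)] at this
    linarith
  have hf' : ContDiff ℝ 1 (deriv f) := by
    have h2 : ContDiff ℝ ((1 : ℕ) + 1) f := by norm_num; exact hf
    exact (contDiff_succ_iff_deriv.mp h2).2.2
  have hdf : Differentiable ℝ f := hf.differentiable (by norm_num)
  have hdf' : DifferentiableAt ℝ (deriv f) x := hf'.differentiable one_ne_zero x
  have hR := hasDerivAt_Rc c x
  have hfx : HasDerivAt f (deriv f x) x := (hdf x).hasDerivAt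
  have hf'x : HasDerivAt (deriv f) (deriv (deriv f) x) x := hdf'.hasDerivAt
  have hprod : HasDerivAt (fun y => Real.sqrt 2 * Rc c y * f y)
      ((Real.sqrt 2 * (Real.sqrt ((2 - c ^ 2) / 2) * (Real.sqrt (2 - c ^ 2) / 2)
          * ((Real.cosh (Real.sqrt (2 - c ^ 2) * x / 2))⁻¹) ^ 2)) * f x
        + Real.sqrt 2 * Rc c x * deriv f x) x :=
    (hR.const_mul (Real.sqrt 2)).mul hfx
  have hSc : HasDerivAt (Sc c f)
      (deriv (deriv f) x
        + ((Real.sqrt 2 * (Real.sqrt ((2 - c ^ 2) / 2) * (Real.sqrt (2 - c ^ 2) / 2)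
            * ((Real.cosh (Real.sqrt (2 - c ^ 2) * x / 2))⁻¹) ^ 2)) * f x
          + Real.sqrt 2 * Rc c x * deriv f x)) x := hf'x.add hprod
  have hderiv := hSc.deriv
  have hab : Real.sqrt 2 * Real.sqrt ((2 - c ^ 2) / 2) = Real.sqrt (2 - c ^ 2) := by
    have h22 : (2 : ℝ) * ((2 - c ^ 2) / 2) = 2 - c ^ 2 := by ring
    rw [← Real.sqrt_mul (by norm_num : (0:ℝ) ≤ 2), h22]
  have htanh : Real.tanh (Real.sqrt (2 - c ^ 2) * x / 2) ^ 2
      = 1 - ((Real.cosh (Real.sqrt (2 - c ^ 2) * x / 2))⁻¹) ^ 2 := by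
    have hid : Real.cosh (Real.sqrt (2 - c ^ 2) * x / 2) ^ 2
        - Real.sinh (Real.sqrt (2 - c ^ 2) * x / 2) ^ 2 = 1 :=
      Real.cosh_sq_sub_sinh_sq _
    have hcne : Real.cosh (Real.sqrt (2 - c ^ 2) * x / 2) ≠ 0 := (Real.cosh_pos _).ne'
    rw [Real.tanh_eq_sinh_div_cosh]
    field_simp
    linarith
  rw [show Sst c (Sc c f) x
      = -deriv (Sc c f) x + Real.sqrt 2 * Rc c x * Sc c f x from rfl, hderiv]
  unfold Sc Q Rc
  linear_combination
    (f x * ((Real.sqrt 2 * Real.sqrt ((2 - c ^ 2) / 2) + Real.sqrt (2 - c ^ 2))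
        * Real.tanh (Real.sqrt (2 - c ^ 2) * x / 2) ^ 2
      - (Real.sqrt (2 - c ^ 2) / 2)
        * ((Real.cosh (Real.sqrt (2 - c ^ 2) * x / 2))⁻¹) ^ 2)) * hab
    + (f x * Real.sqrt (2 - c ^ 2) ^ 2) * htanh
end

section
/- Let c ∈ (−√2, √2) and β = √(2 − c²). For every four times continuously differentiable function f : ℝ → ℝ and every x ∈ ℝ, one has S_c((L_− − c²)(S_c* f))(x) = f''''(x) − β²·f''(x); that is, the factorization identity S_c ∘ (L_− − c²) ∘ S_c* = (∂_x² − β²)·∂_x² holds. -/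
open Real

/-- The operator `L₋ f = -f'' + c² f - Q_c f`. -/
noncomputable def Lm (c : ℝ) (f : ℝ → ℝ) (x : ℝ) : ℝ :=
  -deriv (deriv f) x + c ^ 2 * f x - Q c x * f x

/-- Factorization identity `S_c ∘ (L₋ - c²) ∘ S_c* = (∂ₓ² - β²) ∂ₓ²`:
for `f` of class `C⁴`, `S_c((L₋ - c²)(S_c* f)) = f'''' - β² f''`. -/
theorem Lminus_factorization (c : ℝ)
    (hc : c ∈ Set.Ioo (-Real.sqrt 2) (Real.sqrt 2))
    (f : ℝ → ℝ) (hf : ContDiff ℝ 4 f) (x : ℝ) :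
    Sc c (fun y => Lm c (Sst c f) y - c ^ 2 * Sst c f y) x
      = iteratedDeriv 4 f x - (Real.sqrt (2 - c ^ 2)) ^ 2 * iteratedDeriv 2 f x := by
  obtain ⟨hc1, hc2⟩ := hc
  have h2 : (0:ℝ) ≤ 2 := by norm_num
  have hsq : (Real.sqrt 2) ^ 2 = 2 := Real.sq_sqrt h2
  have hcc : c ^ 2 < 2 := by nlinarith [Real.sqrt_nonneg 2]
  set β : ℝ := Real.sqrt (2 - c ^ 2) with hβdef
  have hβ2 : β ^ 2 = 2 - c ^ 2 := Real.sq_sqrt (by linarith)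
  set a : ℝ → ℝ := fun y => β * Real.tanh (β * y / 2) with hadef
  have ha_eq : ∀ y, Real.sqrt 2 * Rc c y = a y := by
    intro y
    unfold Rc
    rw [← mul_assoc, ← Real.sqrt_mul h2, show 2 * ((2 - c ^ 2) / 2) = 2 - c ^ 2 by ring]
  have hcosh_ne : ∀ y : ℝ, Real.cosh (β * y / 2) ≠ 0 := fun y => ne_of_gt (Real.cosh_pos _)
  have hu : ∀ y : ℝ, HasDerivAt (fun z : ℝ => β * z / 2) (β / 2) y := by
    intro y
    simpa using ((hasDerivAt_id y).const_mul β).div_const 2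
  have htanh : ∀ y : ℝ, HasDerivAt (fun z : ℝ => Real.tanh (β * z / 2))
      (((Real.cosh (β * y / 2))⁻¹) ^ 2 * (β / 2)) y := by
    intro y
    have hs : HasDerivAt (fun z : ℝ => Real.sinh (β * z / 2))
        (Real.cosh (β * y / 2) * (β / 2)) y := (Real.hasDerivAt_sinh _).comp y (hu y)
    have hco : HasDerivAt (fun z : ℝ => Real.cosh (β * z / 2))
        (Real.sinh (β * y / 2) * (β / 2)) y := (Real.hasDerivAt_cosh _).comp y (hu y)
    have hdiv := hs.div hco (hcosh_ne y)
    have heq : (fun z : ℝ => Real.sinh (β * z / 2) / Real.cosh (β * z / 2))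
        = fun z : ℝ => Real.tanh (β * z / 2) := by
      funext z; rw [Real.tanh_eq_sinh_div_cosh]
    replace hdiv : HasDerivAt (fun z : ℝ => Real.sinh (β * z / 2) / Real.cosh (β * z / 2)) _ y := hdiv
    rw [heq] at hdiv
    have h1 : Real.cosh (β * y / 2) ^ 2 - Real.sinh (β * y / 2) ^ 2 = 1 :=
      Real.cosh_sq_sub_sinh_sq _
    convert hdiv using 1
    rw [show Real.cosh (β * y / 2) * (β / 2) * Real.cosh (β * y / 2)
        - Real.sinh (β * y / 2) * (Real.sinh (β * y / 2) * (β / 2))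
        = (Real.cosh (β * y / 2) ^ 2 - Real.sinh (β * y / 2) ^ 2) * (β / 2) by ring, h1]
    field_simp
  have ha : ∀ y : ℝ, HasDerivAt a (Q c y) y := by
    intro y
    have := (htanh y).const_mul β
    replace this : HasDerivAt a _ y := this
    convert this using 1
    show β ^ 2 / 2 * ((Real.cosh (β * y / 2))⁻¹) ^ 2 = _
    ring
  have hQ : ∀ y : ℝ, HasDerivAt (Q c) (-(a y * Q c y)) y := by
    intro y
    have hco : HasDerivAt (fun z : ℝ => Real.cosh (β * z / 2))
        (Real.sinh (β * y / 2) * (β / 2)) y := (Real.hasDerivAt_cosh _).comp y (hu y)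
    have hinv : HasDerivAt (fun z : ℝ => (Real.cosh (β * z / 2))⁻¹)
        (-(Real.sinh (β * y / 2) * (β / 2)) / (Real.cosh (β * y / 2)) ^ 2) y :=
      hco.inv (hcosh_ne y)
    have hpow := hinv.pow 2
    have hfin := hpow.const_mul (β ^ 2 / 2)
    have heq : (fun z : ℝ => β ^ 2 / 2 * ((Real.cosh (β * z / 2))⁻¹) ^ 2) = Q c := by
      funext z; show _ = Q c z; unfold Q; rfl
    replace hfin : HasDerivAt (fun z : ℝ => β ^ 2 / 2 * ((Real.cosh (β * z / 2))⁻¹) ^ 2) _ y := hfin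
    rw [heq] at hfin
    convert hfin using 1
    show -(β * Real.tanh (β * y / 2) * (β ^ 2 / 2 * ((Real.cosh (β * y / 2))⁻¹) ^ 2)) = _
    rw [Real.tanh_eq_sinh_div_cosh]
    field_simp
    rw [one_div, show (2 - 1 : ℕ) = 1 from rfl, pow_one, Nat.cast_ofNat,
      mul_right_comm (β ^ 3 * Real.sinh (β * y / 2) * Real.cosh (β * y / 2)) (2:ℝ),
      mul_inv_cancel_right₀ (hcosh_ne y)]
    ring
  have hf4 : ContDiff ℝ ((3:ℕ) + 1) f := by exact_mod_cast hf
  have hfd : Differentiable ℝ f := (contDiff_succ_iff_deriv.mp hf4).1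
  have hf3 : ContDiff ℝ ((2:ℕ) + 1) (deriv f) := by
    exact_mod_cast (contDiff_succ_iff_deriv.mp hf4).2.2
  have hf1d : Differentiable ℝ (deriv f) := (contDiff_succ_iff_deriv.mp hf3).1
  have hf2' : ContDiff ℝ ((1:ℕ) + 1) (deriv (deriv f)) := by
    exact_mod_cast (contDiff_succ_iff_deriv.mp hf3).2.2
  have hf2d : Differentiable ℝ (deriv (deriv f)) := (contDiff_succ_iff_deriv.mp hf2').1
  have hf1' : ContDiff ℝ ((0:ℕ) + 1) (deriv (deriv (deriv f))) := by
    exact_mod_cast (contDiff_succ_iff_deriv.mp hf2').2.2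
  have hf3d : Differentiable ℝ (deriv (deriv (deriv f))) := (contDiff_succ_iff_deriv.mp hf1').1
  set f1 : ℝ → ℝ := deriv f with hf1def
  set f2 : ℝ → ℝ := deriv f1 with hf2def
  set f3 : ℝ → ℝ := deriv f2 with hf3def
  set f4 : ℝ → ℝ := deriv f3 with hf4def
  have Hf : ∀ y, HasDerivAt f (f1 y) y := fun y => (hfd y).hasDerivAt
  have Hf1 : ∀ y, HasDerivAt f1 (f2 y) y := fun y => (hf1d y).hasDerivAt
  have Hf2 : ∀ y, HasDerivAt f2 (f3 y) y := fun y => (hf2d y).hasDerivAt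
  have Hf3 : ∀ y, HasDerivAt f3 (f4 y) y := fun y => (hf3d y).hasDerivAt
  have hg_eq : Sst c f = fun y => -f1 y + a y * f y := by
    funext y; unfold Sst; rw [ha_eq y]
  set g1 : ℝ → ℝ := fun y => -f2 y + (Q c y * f y + a y * f1 y) with hg1def
  have Hg : ∀ y, HasDerivAt (Sst c f) (g1 y) y := by
    intro y
    rw [hg_eq]
    exact ((Hf1 y).neg).add ((ha y).mul (Hf y))
  have hderiv_g : deriv (Sst c f) = g1 := funext fun y => (Hg y).deriv
  set g2 : ℝ → ℝ := fun y =>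
    -f3 y + ((-(a y * Q c y) * f y + Q c y * f1 y) + (Q c y * f1 y + a y * f2 y)) with hg2def
  have Hg1 : ∀ y, HasDerivAt g1 (g2 y) y := by
    intro y
    exact ((Hf2 y).neg).add (((hQ y).mul (Hf y)).add ((ha y).mul (Hf1 y)))
  have hderiv2_g : deriv (deriv (Sst c f)) = g2 := by
    rw [hderiv_g]; exact funext fun y => (Hg1 y).deriv
  set h : ℝ → ℝ := fun y => Lm c (Sst c f) y - c ^ 2 * Sst c f y with hhdef
  have hh_eq : h = fun y => -g2 y - Q c y * (-f1 y + a y * f y) := by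
    funext y
    show Lm c (Sst c f) y - c ^ 2 * Sst c f y = _
    unfold Lm
    rw [hderiv2_g, hg_eq]
    ring
  -- derivative of g2
  set g3 : ℝ → ℝ := fun y =>
    -f4 y + (((-(Q c y * Q c y + a y * -(a y * Q c y)) * f y + -(a y * Q c y) * f1 y)
        + (-(a y * Q c y) * f1 y + Q c y * f2 y))
      + ((-(a y * Q c y) * f1 y + Q c y * f2 y) + (Q c y * f2 y + a y * f3 y))) with hg3def
  have Hg2 : ∀ y, HasDerivAt g2 (g3 y) y := by
    intro y
    exact ((Hf3 y).neg).add
      (((((ha y).mul (hQ y)).neg.mul (Hf y)).add ((hQ y).mul (Hf1 y))).add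
        (((hQ y).mul (Hf1 y)).add ((ha y).mul (Hf2 y))))
  -- derivative of h
  set D : ℝ → ℝ := fun y =>
    -g3 y - (-(a y * Q c y) * (-f1 y + a y * f y)
      + Q c y * (-f2 y + (Q c y * f y + a y * f1 y))) with hDdef
  have Hh : ∀ y, HasDerivAt h (D y) y := by
    intro y
    rw [hh_eq]
    exact (Hg2 y).neg.sub ((hQ y).mul (((Hf1 y).neg).add ((ha y).mul (Hf y))))
  -- key algebraic relation a² + 2Q = β²
  have hkey : a x ^ 2 + 2 * Q c x = β ^ 2 := by
    have h1 : Real.cosh (β * x / 2) ^ 2 - Real.sinh (β * x / 2) ^ 2 = 1 :=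
      Real.cosh_sq_sub_sinh_sq _
    show (β * Real.tanh (β * x / 2)) ^ 2
        + 2 * (β ^ 2 / 2 * ((Real.cosh (β * x / 2))⁻¹) ^ 2) = β ^ 2
    rw [Real.tanh_eq_sinh_div_cosh]
    field_simp
    linear_combination (-β ^ 2) * h1
  have hi4 : iteratedDeriv 4 f = f4 := by
    simp only [hf4def, hf3def, hf2def, hf1def]
    simp [iteratedDeriv_succ, iteratedDeriv_zero]
  have hi2 : iteratedDeriv 2 f = f2 := by
    simp only [hf2def, hf1def]
    simp [iteratedDeriv_succ, iteratedDeriv_zero]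
  unfold Sc
  rw [ha_eq x, (Hh x).deriv, hi4, hi2]
  have hhx : h x = -g2 x - Q c x * (-f1 x + a x * f x) := by rw [hh_eq]
  rw [hhx]
  simp only [hDdef, hg3def, hg2def]
  linear_combination (-(f2 x)) * hkey
end

section
/- Let c ∈ (−√2, √2). Let f : ℝ → ℝ be continuously differentiable with f and f' bounded, and assume ∫_ℝ f·Q_c = 0. Then the function g defined by g(x) = (1/Q_c(x))·∫_x^∞ f(y)·Q_c(y) dy also satisfies g(x) = −(1/Q_c(x))·∫_{−∞}^x f(y)·Q_c(y) dy for every x, g is twice continuously differentiable with g and g' bounded, and S_c* g = f, i.e. −g'(x) + √2·R_c(x)·g(x) = f(x) for all x ∈ ℝ. -/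
open Real MeasureTheory

open Real MeasureTheory Filter Set Topology

noncomputable def P (b x : ℝ) : ℝ := b ^ 2 / 2 * ((Real.cosh (b * x / 2))⁻¹) ^ 2

lemma abs_tanh_le_one (x : ℝ) : |Real.tanh x| ≤ 1 := by
  rw [Real.tanh_eq_sinh_div_cosh, abs_div, abs_of_pos (Real.cosh_pos x),
    div_le_one (Real.cosh_pos x), abs_le]
  constructor
  · have := Real.sinh_lt_cosh (-x)
    rw [Real.sinh_neg, Real.cosh_neg] at this; linarith
  · exact (Real.sinh_lt_cosh x).le

lemma hasDerivAt_tanh (x : ℝ) : HasDerivAt Real.tanh (((Real.cosh x)⁻¹) ^ 2) x := by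
  have h : HasDerivAt (fun y => Real.sinh y / Real.cosh y)
      ((Real.cosh x * Real.cosh x - Real.sinh x * Real.sinh x) / Real.cosh x ^ 2) x :=
    (Real.hasDerivAt_sinh x).div (Real.hasDerivAt_cosh x) (Real.cosh_pos x).ne'
  have : (Real.cosh x * Real.cosh x - Real.sinh x * Real.sinh x) / Real.cosh x ^ 2
      = ((Real.cosh x)⁻¹) ^ 2 := by
    have h1 : Real.cosh x * Real.cosh x - Real.sinh x * Real.sinh x = 1 := by
      have := Real.cosh_sq_sub_sinh_sq x; nlinarith
    rw [h1, inv_pow, one_div]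
  rw [← this]
  exact h.congr_of_eventuallyEq (by filter_upwards with y using (Real.tanh_eq_sinh_div_cosh y))

lemma tanh_rep (x : ℝ) : Real.tanh x = (1 - Real.exp (-(2*x))) / (1 + Real.exp (-(2*x))) := by
  rw [Real.tanh_eq_sinh_div_cosh, Real.sinh_eq, Real.cosh_eq]
  have h1 : Real.exp x * Real.exp (-x) = 1 := by rw [← Real.exp_add]; simp
  have h2 : Real.exp (-(2*x)) = Real.exp (-x) * Real.exp (-x) := by
    rw [← Real.exp_add]; ring_nf
  have hp : 0 < 1 + Real.exp (-(2*x)) := by positivity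
  have hc : (0:ℝ) < Real.exp x + Real.exp (-x) := by positivity
  field_simp
  have h2' : Real.exp (-(x*2)) = Real.exp (-x) * Real.exp (-x) := by
    rw [← Real.exp_add]; ring_nf
  linear_combination (2 * Real.exp x) * h2' + (2 * Real.exp (-x)) * h1

lemma tendsto_tanh_atTop : Tendsto Real.tanh atTop (𝓝 1) := by
  have he : Tendsto (fun x : ℝ => Real.exp (-(2*x))) atTop (𝓝 0) := by
    apply Real.tendsto_exp_atBot.comp
    have : Tendsto (fun x : ℝ => 2*x) atTop atTop :=
      (tendsto_id.const_mul_atTop (by norm_num : (0:ℝ) < 2))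
    exact tendsto_neg_atBot_iff.mpr this
  have : Tendsto (fun x : ℝ => (1 - Real.exp (-(2*x))) / (1 + Real.exp (-(2*x)))) atTop
      (𝓝 ((1 - 0) / (1 + 0))) :=
    ((tendsto_const_nhds.sub he).div (tendsto_const_nhds.add he) (by norm_num))
  rw [show Real.tanh = fun x => (1 - Real.exp (-(2*x))) / (1 + Real.exp (-(2*x))) from
    funext tanh_rep]
  simpa using this

lemma tendsto_tanh_atBot : Tendsto Real.tanh atBot (𝓝 (-1)) := by
  have : Tendsto (fun x : ℝ => -Real.tanh (-x)) atBot (𝓝 (-1)) := by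
    have hneg : Tendsto (fun x : ℝ => -x) atBot atTop := tendsto_neg_atBot_atTop
    exact (tendsto_tanh_atTop.comp hneg).neg
  simpa [Real.tanh_neg] using this

lemma P_pos {b : ℝ} (hb : 0 < b) (x : ℝ) : 0 < P b x := by
  have h1 : 0 < Real.cosh (b * x / 2) := Real.cosh_pos _
  have hb' : b ≠ 0 := hb.ne'
  unfold P; positivity

lemma hasDerivAt_inner (b x : ℝ) : HasDerivAt (fun y : ℝ => b * y / 2) (b / 2) x := by
  simpa using ((hasDerivAt_id x).const_mul b).div_const 2

lemma hasDerivAt_T (b x : ℝ) :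
    HasDerivAt (fun y => b * Real.tanh (b * y / 2)) (P b x) x := by
  have ht : HasDerivAt (fun y => Real.tanh (b * y / 2))
      (((Real.cosh (b * x / 2))⁻¹) ^ 2 * (b / 2)) x :=
    by have := (hasDerivAt_tanh (b * x / 2)).comp x (hasDerivAt_inner b x); exact this
  have := ht.const_mul b
  convert this using 1
  rfl
  rfl
  unfold P; ring

lemma P_hasDerivAt {b : ℝ} (x : ℝ) :
    HasDerivAt (P b) (-(b * Real.tanh (b * x / 2)) * P b x) x := by
  have hcosh : HasDerivAt (fun y => Real.cosh (b * y / 2))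
      (Real.sinh (b * x / 2) * (b / 2)) x :=
    by have := (Real.hasDerivAt_cosh (b * x / 2)).comp x (hasDerivAt_inner b x); exact this
  have hinv := hcosh.inv (Real.cosh_pos _).ne'
  have hpow := hinv.pow 2
  have := hpow.const_mul (b ^ 2 / 2)
  convert this using 1
  rfl
  rfl
  rfl
  rw [Real.tanh_eq_sinh_div_cosh]
  have hc := (Real.cosh_pos (b * x / 2)).ne'
  unfold P
  rw [show (fun y => Real.cosh (b * y / 2))⁻¹ x = (Real.cosh (b * x / 2))⁻¹ from rfl]
  field_simp
  ring_nf
  rw [mul_inv_cancel_right₀ (Real.cosh_pos (b * x * (1 / 2))).ne']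

lemma contDiff_P (b : ℝ) {n : WithTop ℕ∞} : ContDiff ℝ n (P b) := by
  apply contDiff_const.mul
  exact ((Real.contDiff_cosh.comp ((contDiff_const.mul contDiff_id).div_const 2 : ContDiff ℝ _ fun y : ℝ => b * y / 2)).inv
    fun x => (Real.cosh_pos _).ne').pow 2

lemma integrable_P {b : ℝ} (hb : 0 < b) : Integrable (P b) := by
  apply integrable_of_intervalIntegral_norm_bounded (μ := volume)
    (a := fun r : ℝ => -r) (b := fun r : ℝ => r) (l := atTop) (2 * b)
  · exact fun i => ((contDiff_P b (n := 0)).continuous).integrableOn_Ioc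
  · exact tendsto_neg_atBot_iff.mpr tendsto_id
  · exact tendsto_id
  · filter_upwards [eventually_ge_atTop (0:ℝ)] with r hr
    have hle : -r ≤ r := by linarith
    have heq : (∫ x in (-r)..r, ‖P b x‖) = ∫ x in (-r)..r, P b x := by
      apply intervalIntegral.integral_congr
      intro x _
      exact Real.norm_of_nonneg (P_pos hb x).le
    have hftc : (∫ x in (-r)..r, P b x)
        = b * Real.tanh (b * r / 2) - b * Real.tanh (b * (-r) / 2) := by
      apply intervalIntegral.integral_eq_sub_of_hasDerivAt
      · exact fun t _ => hasDerivAt_T b t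
      · exact ((contDiff_P b (n := 0)).continuous).intervalIntegrable _ _
    rw [heq, hftc]
    have h1 := abs_tanh_le_one (b * r / 2)
    have h2 := abs_tanh_le_one (b * (-r) / 2)
    rw [abs_le] at h1 h2
    nlinarith [h1.1, h1.2, h2.1, h2.2]

lemma tendsto_T_atTop {b : ℝ} (hb : 0 < b) :
    Tendsto (fun y => b * Real.tanh (b * y / 2)) atTop (𝓝 b) := by
  have hinner : Tendsto (fun y : ℝ => b * y / 2) atTop atTop :=
    (tendsto_id.const_mul_atTop hb).atTop_div_const (by norm_num)
  have := (tendsto_tanh_atTop.comp hinner).const_mul b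
  simpa using this

lemma tendsto_T_atBot {b : ℝ} (hb : 0 < b) :
    Tendsto (fun y => b * Real.tanh (b * y / 2)) atBot (𝓝 (-b)) := by
  have hinner : Tendsto (fun y : ℝ => b * y / 2) atBot atBot := by
    apply Tendsto.atBot_div_const (by norm_num : (0:ℝ) < 2)
    exact (tendsto_const_mul_atBot_of_pos hb).mpr tendsto_id
  have := (tendsto_tanh_atBot.comp hinner).const_mul b
  simpa using this

lemma integral_P_Ioi {b : ℝ} (hb : 0 < b) (x : ℝ) :
    ∫ y in Set.Ioi x, P b y = b - b * Real.tanh (b * x / 2) :=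
  integral_Ioi_of_hasDerivAt_of_tendsto' (fun t _ => hasDerivAt_T b t)
    (integrable_P hb).integrableOn (tendsto_T_atTop hb)

lemma integral_P_Iic {b : ℝ} (hb : 0 < b) (x : ℝ) :
    ∫ y in Set.Iic x, P b y = b * Real.tanh (b * x / 2) + b := by
  have := integral_Iic_of_hasDerivAt_of_tendsto' (a := x) (fun t _ => hasDerivAt_T b t)
    (integrable_P hb).integrableOn (tendsto_T_atBot hb)
  rw [this]; ring

lemma cosh_inv_sq (x : ℝ) : ((Real.cosh x)⁻¹) ^ 2 = 1 - Real.tanh x ^ 2 := by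
  rw [Real.tanh_eq_sinh_div_cosh]
  have h := Real.cosh_sq_sub_sinh_sq x
  have hc := (Real.cosh_pos x).ne'
  field_simp
  linarith [h]

/-- Inversion of `S_c*`: if `f` is `C¹` with `f, f'` bounded and `∫ f Q_c = 0`,
then `g(x) = Q_c(x)⁻¹ ∫_x^∞ f Q_c` equals `-Q_c(x)⁻¹ ∫_{-∞}^x f Q_c`, is `C²`
with `g, g'` bounded, and satisfies `S_c* g = f`. -/
theorem Sst_inverse (c : ℝ)
    (hc : c ∈ Set.Ioo (-Real.sqrt 2) (Real.sqrt 2))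
    (f : ℝ → ℝ) (hf : ContDiff ℝ 1 f)
    (hfb : ∃ M, ∀ x, |f x| ≤ M) (hf'b : ∃ M, ∀ x, |deriv f x| ≤ M)
    (horth : ∫ y, f y * Q c y = 0) :
    (∀ x, (Q c x)⁻¹ * ∫ y in Set.Ioi x, f y * Q c y
        = -(Q c x)⁻¹ * ∫ y in Set.Iic x, f y * Q c y) ∧
    ContDiff ℝ 2 (fun x => (Q c x)⁻¹ * ∫ y in Set.Ioi x, f y * Q c y) ∧
    (∃ M, ∀ x, |(Q c x)⁻¹ * ∫ y in Set.Ioi x, f y * Q c y| ≤ M) ∧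
    (∃ M, ∀ x,
      |deriv (fun z => (Q c z)⁻¹ * ∫ y in Set.Ioi z, f y * Q c y) x| ≤ M) ∧
    (∀ x, -deriv (fun z => (Q c z)⁻¹ * ∫ y in Set.Ioi z, f y * Q c y) x
        + Real.sqrt 2 * Rc c x
          * ((Q c x)⁻¹ * ∫ y in Set.Ioi x, f y * Q c y) = f x) := by
  obtain ⟨hc1, hc2⟩ := hc
  have h2 : (0:ℝ) ≤ 2 := by norm_num
  have hsq : Real.sqrt 2 ^ 2 = 2 := Real.sq_sqrt h2
  have hclt : c ^ 2 < 2 := by nlinarith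
  set b : ℝ := Real.sqrt (2 - c ^ 2) with hbdef
  have hb : 0 < b := Real.sqrt_pos.mpr (by linarith)
  have hQP : Q c = P b := rfl
  obtain ⟨M, hM⟩ := hfb
  have hM0 : 0 ≤ M := le_trans (abs_nonneg _) (hM 0)
  have hQcont : Continuous (Q c) := by rw [hQP]; exact (contDiff_P b (n := 0)).continuous
  have hQpos : ∀ x, 0 < Q c x := by intro x; rw [hQP]; exact P_pos hb x
  set h : ℝ → ℝ := fun y => f y * Q c y with hhdef
  have hcont : Continuous h := hf.continuous.mul hQcont
  have hint : Integrable h := by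
    rw [hhdef, hQP]
    exact (integrable_P hb).bdd_mul hf.continuous.aestronglyMeasurable
      (ae_of_all _ fun x => by simpa [Real.norm_eq_abs] using hM x)
  set I : ℝ → ℝ := fun x => ∫ y in Set.Ioi x, h y with hIdef
  set J : ℝ → ℝ := fun x => ∫ y in Set.Iic x, h y with hJdef
  have hIJ : ∀ x, I x = - J x := by
    intro x
    have h0 := intervalIntegral.integral_Iic_add_Ioi (b := x) hint.integrableOn hint.integrableOn
    rw [horth] at h0
    show (∫ y in Set.Ioi x, h y) = - ∫ y in Set.Iic x, h y
    linarith [h0]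
  have hJd : ∀ x, HasDerivAt J (h x) x := by
    intro x
    have heq : J = fun t => (∫ y in Set.Iic (0:ℝ), h y) + ∫ y in (0:ℝ)..t, h y := by
      funext t
      have := intervalIntegral.integral_Iic_sub_Iic (a := (0:ℝ)) (b := t)
        hint.integrableOn hint.integrableOn
      show (∫ y in Set.Iic t, h y) = _
      linarith [this]
    rw [heq]
    exact (intervalIntegral.integral_hasDerivAt_right hint.intervalIntegrable
      (hcont.stronglyMeasurableAtFilter _ _) hcont.continuousAt).const_add _
  have hId : ∀ x, HasDerivAt I (-(h x)) x := by
    intro x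
    have : I = fun t => -J t := funext hIJ
    rw [this]
    exact (hJd x).neg
  have hIcont : Continuous I := by
    have : Differentiable ℝ I := fun x => (hId x).differentiableAt
    exact this.continuous
  have hQinv : ∀ x, HasDerivAt (fun t => (Q c t)⁻¹)
      (b * Real.tanh (b * x / 2) * (Q c x)⁻¹) x := by
    intro x
    have hQ' : HasDerivAt (Q c) (-(b * Real.tanh (b * x / 2)) * Q c x) x := by
      rw [hQP]; exact P_hasDerivAt x
    have := hQ'.inv (hQpos x).ne'
    convert this using 1
    rfl
    rfl
    rfl
    have hne := (hQpos x).ne'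
    field_simp
  have hg : ∀ x, HasDerivAt (fun z => (Q c z)⁻¹ * ∫ y in Set.Ioi z, h y)
      (b * Real.tanh (b * x / 2) * ((Q c x)⁻¹ * ∫ y in Set.Ioi x, h y) - f x) x := by
    intro x
    have h0 := (hQinv x).mul (hId x)
    rw [hIdef] at h0
    beta_reduce at h0
    convert h0 using 1
    rfl
    rfl
    rfl
    have hne := (hQpos x).ne'
    have hfx : (Q c x)⁻¹ * h x = f x := by
      show (Q c x)⁻¹ * (f x * Q c x) = f x
      field_simp
    have hfx' : (Q c x)⁻¹ * -h x = -f x := by rw [mul_neg, hfx]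
    rw [hfx']
    ring
  have hIb : ∀ x, |I x| ≤ M * (b - b * Real.tanh (b * x / 2)) := by
    intro x
    have h1 : |I x| ≤ ∫ y in Set.Ioi x, |h y| := by
      simpa [Real.norm_eq_abs] using
        norm_integral_le_integral_norm (μ := volume.restrict (Set.Ioi x)) h
    have h2 : (∫ y in Set.Ioi x, |h y|) ≤ ∫ y in Set.Ioi x, M * P b y := by
      apply integral_mono hint.abs.integrableOn
        (((integrable_P hb).const_mul M).integrableOn)
      intro y
      have := hQpos y
      calc |h y| = |f y| * Q c y := by
            rw [hhdef]; rw [abs_mul, abs_of_pos this]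
        _ ≤ M * Q c y := mul_le_mul_of_nonneg_right (hM y) this.le
        _ = M * P b y := by rw [hQP]
    have h3 : (∫ y in Set.Ioi x, M * P b y) = M * (b - b * Real.tanh (b * x / 2)) := by
      rw [integral_const_mul, integral_P_Ioi hb]
    linarith [h1, h2, h3.le, h3.ge]
  have hJb : ∀ x, |J x| ≤ M * (b * Real.tanh (b * x / 2) + b) := by
    intro x
    have h1 : |J x| ≤ ∫ y in Set.Iic x, |h y| := by
      simpa [Real.norm_eq_abs] using
        norm_integral_le_integral_norm (μ := volume.restrict (Set.Iic x)) h
    have h2 : (∫ y in Set.Iic x, |h y|) ≤ ∫ y in Set.Iic x, M * P b y := by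
      apply integral_mono hint.abs.integrableOn
        (((integrable_P hb).const_mul M).integrableOn)
      intro y
      have := hQpos y
      calc |h y| = |f y| * Q c y := by
            rw [hhdef]; rw [abs_mul, abs_of_pos this]
        _ ≤ M * Q c y := mul_le_mul_of_nonneg_right (hM y) this.le
        _ = M * P b y := by rw [hQP]
    have h3 : (∫ y in Set.Iic x, M * P b y) = M * (b * Real.tanh (b * x / 2) + b) := by
      rw [integral_const_mul, integral_P_Iic hb]
    linarith [h1, h2, h3.le]
  have hgb : ∀ x, |(Q c x)⁻¹ * I x| ≤ 2 * M / b := by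
    intro x
    set t := Real.tanh (b * x / 2) with htdef
    have ht1 : |t| ≤ 1 := abs_tanh_le_one _
    rw [abs_le] at ht1
    have hQval : Q c x = b ^ 2 / 2 * (1 - t ^ 2) := by
      rw [hQP]; unfold P; rw [cosh_inv_sq]
    have ht2 : 1 - t ^ 2 > 0 := by nlinarith [hQpos x, hQval, sq_nonneg b]
    have hkey : (b ^ 2 / 2 * (1 - t ^ 2)) * (2 * M / b) = M * b * (1 - t ^ 2) := by
      field_simp
    rw [abs_mul, abs_of_pos (inv_pos.mpr (hQpos x))]
    rw [inv_mul_le_iff₀ (hQpos x), hQval, hkey]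
    rcases le_total 0 x with hx | hx
    · have htpos : 0 ≤ t := by
        rw [htdef, Real.tanh_eq_sinh_div_cosh]
        exact div_nonneg (Real.sinh_nonneg_iff.mpr (by positivity)) (Real.cosh_pos _).le
      have := hIb x
      nlinarith [this, mul_nonneg (mul_nonneg hM0 hb.le)
        (mul_nonneg htpos (sub_nonneg.mpr ht1.2))]
    · have htneg : t ≤ 0 := by
        rw [htdef, Real.tanh_eq_sinh_div_cosh]
        apply div_nonpos_of_nonpos_of_nonneg _ (Real.cosh_pos _).le
        rw [show (0:ℝ) = Real.sinh 0 by simp]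
        apply Real.sinh_le_sinh.mpr
        nlinarith [hb]
      have hJx := hJb x
      have hIx : |I x| ≤ M * (b * t + b) := by rw [hIJ x, abs_neg]; exact hJx
      nlinarith [hIx, mul_nonneg (mul_nonneg hM0 hb.le)
        (mul_nonneg (neg_nonneg.mpr htneg) (by nlinarith [ht1.1] : (0:ℝ) ≤ 1 + t))]
  have htanh : ContDiff ℝ 1 Real.tanh := by
    rw [show Real.tanh = fun x => Real.sinh x / Real.cosh x from
      funext Real.tanh_eq_sinh_div_cosh]
    exact Real.contDiff_sinh.div Real.contDiff_cosh (fun x => (Real.cosh_pos x).ne')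
  have hinnercd : ContDiff ℝ 1 (fun x : ℝ => b * x / 2) :=
    (contDiff_const.mul contDiff_id).div_const 2
  have hgdiff : Differentiable ℝ (fun z => (Q c z)⁻¹ * ∫ y in Set.Ioi z, h y) :=
    fun x => (hg x).differentiableAt
  have hderiv_eq : deriv (fun z => (Q c z)⁻¹ * ∫ y in Set.Ioi z, h y)
      = fun x => b * Real.tanh (b * x / 2) * ((Q c x)⁻¹ * ∫ y in Set.Ioi x, h y) - f x :=
    funext fun x => (hg x).deriv
  have hg1 : ContDiff ℝ 1 (fun z => (Q c z)⁻¹ * ∫ y in Set.Ioi z, h y) := by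
    rw [contDiff_one_iff_deriv]
    refine ⟨hgdiff, ?_⟩
    rw [hderiv_eq]
    exact ((continuous_const.mul (htanh.continuous.comp hinnercd.continuous)).mul
      hgdiff.continuous).sub hf.continuous
  have hg2 : ContDiff ℝ 2 (fun z => (Q c z)⁻¹ * ∫ y in Set.Ioi z, h y) := by
    have h21 := (contDiff_succ_iff_deriv (n := 1)).mpr
      ⟨hgdiff, by simp, by
        rw [hderiv_eq]
        exact ((contDiff_const.mul (htanh.comp hinnercd)).mul hg1).sub hf⟩
    exact h21
  have hRc : ∀ x, Real.sqrt 2 * Rc c x = b * Real.tanh (b * x / 2) := by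
    intro x
    unfold Rc
    rw [← mul_assoc, ← hbdef]
    congr 1
    rw [← Real.sqrt_mul h2, show 2 * ((2 - c ^ 2) / 2) = 2 - c ^ 2 by ring, hbdef]
  refine ⟨?_, ?_, ?_, ?_, ?_⟩
  · intro x
    show (Q c x)⁻¹ * I x = -(Q c x)⁻¹ * J x
    rw [hIJ x]; ring
  · exact hg2
  · exact ⟨2 * M / b, fun x => hgb x⟩
  · refine ⟨b * (2 * M / b) + M, fun x => ?_⟩
    rw [hderiv_eq]
    have hA : |b * Real.tanh (b * x / 2) * ((Q c x)⁻¹ * ∫ y in Set.Ioi x, h y)|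
        ≤ b * (2 * M / b) := by
      rw [abs_mul]
      apply mul_le_mul _ (hgb x) (abs_nonneg _) hb.le
      rw [abs_mul, abs_of_pos hb]
      nlinarith [abs_tanh_le_one (b * x / 2), abs_nonneg (Real.tanh (b * x / 2))]
    calc |b * Real.tanh (b * x / 2) * ((Q c x)⁻¹ * ∫ y in Set.Ioi x, h y) - f x|
        ≤ |b * Real.tanh (b * x / 2) * ((Q c x)⁻¹ * ∫ y in Set.Ioi x, h y)| + |f x| :=
          abs_sub _ _
      _ ≤ b * (2 * M / b) + M := add_le_add hA (hM x)
  · intro x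
    rw [hderiv_eq]
    rw [hRc x]
    ring
end

section
/- Let c ∈ (−√2, √2). If g : ℝ → ℝ is continuously differentiable, bounded, and satisfies S_c* g = 0, i.e. −g'(x) + √2·R_c(x)·g(x) = 0 for all x, then g ≡ 0. Consequently, for a given continuously differentiable f with f, f' bounded and ∫_ℝ f·Q_c = 0, the function g(x) = (1/Q_c(x))·∫_x^∞ f·Q_c is the unique bounded C¹ solution of S_c* g = f. -/
open Real MeasureTheory

/-- The only bounded `C¹` solution of `S_c* g = 0` is `g ≡ 0`; consequently,
for `f` as in the inversion lemma, `g(x) = Q_c(x)⁻¹ ∫_x^∞ f Q_c` is the unique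
bounded `C¹` solution of `S_c* g = f`. -/
theorem Sst_uniqueness (c : ℝ)
    (hc : c ∈ Set.Ioo (-Real.sqrt 2) (Real.sqrt 2)) :
    (∀ g : ℝ → ℝ, ContDiff ℝ 1 g → (∃ M, ∀ x, |g x| ≤ M) →
      (∀ x, -deriv g x + Real.sqrt 2 * Rc c x * g x = 0) →
      ∀ x, g x = 0) ∧
    (∀ f : ℝ → ℝ, ContDiff ℝ 1 f →
      (∃ M, ∀ x, |f x| ≤ M) → (∃ M, ∀ x, |deriv f x| ≤ M) →
      (∫ y, f y * Q c y) = 0 →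
      ∀ h : ℝ → ℝ, ContDiff ℝ 1 h → (∃ M, ∀ x, |h x| ≤ M) →
        (∀ x, -deriv h x + Real.sqrt 2 * Rc c x * h x = f x) →
        ∀ x, h x = (Q c x)⁻¹ * ∫ y in Set.Ioi x, f y * Q c y) := by
  obtain ⟨hc1, hc2⟩ := hc
  set β := Real.sqrt (2 - c ^ 2) with hβdef
  have hc2' : c ^ 2 < 2 := by
    have h := sq_lt_sq' hc1 hc2
    rwa [Real.sq_sqrt (by norm_num : (0:ℝ) ≤ 2)] at h
  have hβpos : 0 < β := Real.sqrt_pos.2 (by linarith)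
  have hβ2 : β ^ 2 = 2 - c ^ 2 := Real.sq_sqrt (by linarith)
  -- rewrite √2 * Rc
  have hR : ∀ x, Real.sqrt 2 * Rc c x
      = β * (Real.sinh (β * x / 2) / Real.cosh (β * x / 2)) := by
    intro x
    have h0 : Real.sqrt 2 * Real.sqrt ((2 - c ^ 2) / 2) = β := by
      rw [← Real.sqrt_mul (by norm_num : (0:ℝ) ≤ 2)]
      congr 1
      ring
    rw [Rc, Real.tanh_eq_sinh_div_cosh, ← mul_assoc, h0]
  have hQpos : ∀ x, 0 < Q c x := by
    intro x
    have h1 : 0 < Real.cosh (β * x / 2) := Real.cosh_pos _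
    rw [Q]
    positivity
  have hQcont : Continuous (Q c) := by
    apply Continuous.mul continuous_const
    exact ((Real.continuous_cosh.comp (by continuity)).inv₀
      (fun x => (Real.cosh_pos _).ne')).pow 2
  -- derivative of Q
  have hQderiv : ∀ x, HasDerivAt (Q c)
      (-(Real.sqrt 2 * Rc c x) * Q c x) x := by
    intro x
    have hu : HasDerivAt (fun x : ℝ => β * x / 2) (β / 2) x := by
      simpa using ((hasDerivAt_id x).const_mul β).div_const 2
    have hch : HasDerivAt (fun x : ℝ => Real.cosh (β * x / 2))
        (Real.sinh (β * x / 2) * (β / 2)) x :=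
      hu.cosh
    have hne : Real.cosh (β * x / 2) ≠ 0 := (Real.cosh_pos _).ne'
    have hinv := hch.inv hne
    have hpow := hinv.pow 2
    have hfin := hpow.const_mul (β ^ 2 / 2)
    convert hfin using 1
    · rfl
    · rfl
    · rfl
    rw [hR x, Q, ← hβdef]
    simp only [Pi.inv_apply]
    field_simp
    simp only [Nat.cast_ofNat, show (2:ℕ) - 1 = 1 from rfl, pow_one, one_div]
    field_simp
  -- integrability of Q on Ioi
  have hQbound : ∀ x, Q c x ≤ 2 * β ^ 2 * Real.exp (-β * x) := by
    intro x
    have h1 : Real.exp (β * x / 2) / 2 ≤ Real.cosh (β * x / 2) := by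
      rw [Real.cosh_eq]
      have := Real.exp_pos (-(β * x / 2))
      linarith
    have h2 : (Real.cosh (β * x / 2))⁻¹ ≤ 2 * Real.exp (-(β * x / 2)) := by
      have h3 := inv_anti₀ (by positivity) h1
      calc (Real.cosh (β * x / 2))⁻¹ ≤ (Real.exp (β * x / 2) / 2)⁻¹ := h3
        _ = 2 * Real.exp (-(β * x / 2)) := by
            rw [Real.exp_neg]; field_simp
    have h4 : ((Real.cosh (β * x / 2))⁻¹) ^ 2
        ≤ (2 * Real.exp (-(β * x / 2))) ^ 2 :=
      pow_le_pow_left₀ (inv_nonneg.2 (Real.cosh_pos _).le) h2 2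
    have h5 : (2 * Real.exp (-(β * x / 2))) ^ 2 = 4 * Real.exp (-β * x) := by
      rw [show -β * x = -(β * x / 2) + -(β * x / 2) by ring, Real.exp_add]
      ring
    rw [Q]
    nlinarith [h4, h5]
  have hQint : ∀ a : ℝ, IntegrableOn (Q c) (Set.Ioi a) := by
    intro a
    apply Integrable.mono
      ((exp_neg_integrableOn_Ioi a hβpos).const_mul (2 * β ^ 2))
      (hQcont.aestronglyMeasurable.restrict)
    filter_upwards with x
    rw [Real.norm_eq_abs, Real.norm_eq_abs, abs_of_pos (hQpos x),
      abs_of_pos (by positivity)]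
    exact hQbound x
  -- Q tends to 0 at top
  have hQtop : Filter.Tendsto (Q c) Filter.atTop (nhds 0) := by
    have hc1 : Filter.Tendsto (fun x : ℝ => Real.cosh (β * x / 2))
        Filter.atTop Filter.atTop := by
      apply Filter.tendsto_atTop_mono
        (fun x => (by linarith [Real.exp_pos (-(β * x / 2)),
          Real.cosh_eq (β * x / 2)] :
            Real.exp (β * x / 2) / 2 ≤ Real.cosh (β * x / 2)))
      apply Filter.Tendsto.atTop_div_const (by norm_num)
      exact Real.tendsto_exp_atTop.comp
        ((Filter.Tendsto.const_mul_atTop hβpos Filter.tendsto_id).atTop_div_const (by norm_num))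
    have := ((tendsto_inv_atTop_zero.comp hc1).pow 2).const_mul (β ^ 2 / 2)
    have h2 : Filter.Tendsto
        (fun k => β ^ 2 / 2 * ((Real.cosh (β * k / 2))⁻¹) ^ 2)
        Filter.atTop (nhds 0) := by
      simpa [Function.comp, inv_pow] using this
    exact h2.congr (fun k => by rw [Q])
  -- the key identity
  have key : ∀ f : ℝ → ℝ, Continuous f → (∃ M, ∀ x, |f x| ≤ M) →
      ∀ h : ℝ → ℝ, ContDiff ℝ 1 h → (∃ M, ∀ x, |h x| ≤ M) →
      (∀ x, -deriv h x + Real.sqrt 2 * Rc c x * h x = f x) →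
      ∀ x, Q c x * h x = ∫ y in Set.Ioi x, f y * Q c y := by
    intro f hfc ⟨Mf, hMf⟩ h hh ⟨Mh, hMh⟩ hode x
    have hdiff : Differentiable ℝ h := hh.differentiable (by norm_num)
    have hF : ∀ y, HasDerivAt (fun z => Q c z * h z) (-(f y * Q c y)) y := by
      intro y
      have hd : HasDerivAt h (Real.sqrt 2 * Rc c y * h y - f y) y := by
        have h1 := (hdiff y).hasDerivAt
        have h2 : deriv h y = Real.sqrt 2 * Rc c y * h y - f y := by
          have := hode y; linarith
        rwa [h2] at h1
      have := (hQderiv y).mul hd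
      convert this using 1
      · rfl
      · rfl
      · rfl
      ring
    have hfQint : IntegrableOn (fun y => f y * Q c y) (Set.Ioi x) := by
      apply (hQint x).bdd_mul (c := Mf) (hfc.aestronglyMeasurable.restrict) (Filter.Eventually.of_forall ?_)
      intro y
      exact (Real.norm_eq_abs (f y)) ▸ hMf y
    have hlim1 : Filter.Tendsto (fun b => ∫ y in x..b, f y * Q c y)
        Filter.atTop (nhds (∫ y in Set.Ioi x, f y * Q c y)) :=
      intervalIntegral_tendsto_integral_Ioi x hfQint Filter.tendsto_id
    have hlim2 : Filter.Tendsto (fun b => Q c b * h b)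
        Filter.atTop (nhds 0) := by
      have hbd : ∀ b, ‖Q c b * h b‖ ≤ Mh * Q c b := by
        intro b
        rw [Real.norm_eq_abs, abs_mul, abs_of_pos (hQpos b)]
        calc Q c b * |h b| ≤ Q c b * Mh :=
              mul_le_mul_of_nonneg_left (hMh b) (hQpos b).le
          _ = Mh * Q c b := by ring
      exact squeeze_zero_norm hbd (by simpa using hQtop.const_mul Mh)
    have hftc : ∀ b, x ≤ b →
        Q c b * h b = Q c x * h x - ∫ y in x..b, f y * Q c y := by
      intro b hb
      have := intervalIntegral.integral_eq_sub_of_hasDerivAt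
        (f := fun z => Q c z * h z) (f' := fun y => -(f y * Q c y))
        (a := x) (b := b) (fun y _ => hF y)
        (((hfc.mul hQcont).neg).intervalIntegrable x b)
      rw [intervalIntegral.integral_neg] at this
      linarith
    have hlim3 : Filter.Tendsto (fun b => Q c b * h b) Filter.atTop
        (nhds (Q c x * h x - ∫ y in Set.Ioi x, f y * Q c y)) := by
      apply Filter.Tendsto.congr' _ ((tendsto_const_nhds.sub hlim1))
      filter_upwards [Filter.eventually_ge_atTop x] with b hb
      exact (hftc b hb).symm
    have := tendsto_nhds_unique hlim2 hlim3
    linarith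
  constructor
  · intro g hg hgb hode x
    have h0 := key (fun _ => 0) continuous_const ⟨0, by simp⟩ g hg hgb
      (by intro y; simpa using hode y) x
    simp only [zero_mul, integral_zero] at h0
    exact (mul_eq_zero.1 h0).resolve_left (hQpos x).ne'
  · intro f hf hfb _ _ h hh hhb hode x
    have hfc : Continuous f := hf.continuous
    have hx := key f hfc hfb h hh hhb hode x
    field_simp [(hQpos x).ne']
    linarith [hx]
end

section
/- For every κ > 0 there exists a constant C > 0 such that for every continuously differentiable function f : ℝ → ℝ with ∫_ℝ (f')² < ∞ and ∫_ℝ ρ·f² < ∞, one has sup_{x ∈ ℝ} |f(x)|·ρ(x)^κ ≤ C·( ∫_ℝ (f')² + ∫_ℝ ρ·f² )^{1/2}, where ρ(x) = sech(x). -/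
open Real MeasureTheory

/-- The weight `ρ(x) = sech x`. -/
noncomputable def rho (x : ℝ) : ℝ := (Real.cosh x)⁻¹

lemma rho_pos (x : ℝ) : 0 < rho x := inv_pos.mpr (Real.cosh_pos x)

lemma rho_le_one (x : ℝ) : rho x ≤ 1 := by
  rw [rho, ← inv_one]
  exact inv_anti₀ one_pos (Real.one_le_cosh x)

lemma rho_continuous : Continuous rho :=
  Real.continuous_cosh.inv₀ fun x => (Real.cosh_pos x).ne'

lemma rho_le_exp (x : ℝ) : rho x ≤ 2 * Real.exp (-|x|) := by
  have h : Real.exp |x| ≤ Real.exp x + Real.exp (-x) := by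
    rcases abs_cases x with ⟨h1, _⟩ | ⟨h1, _⟩ <;> rw [h1] <;>
      nlinarith [Real.exp_pos x, Real.exp_pos (-x)]
  have h2 : (2:ℝ) * Real.exp (-|x|) = (Real.exp |x| / 2)⁻¹ := by
    rw [Real.exp_neg]
    field_simp
  rw [rho, Real.cosh_eq, h2]
  exact inv_anti₀ (by positivity) (by linarith)

/-- Cauchy–Schwarz on an interval. -/
lemma cs_interval (g : ℝ → ℝ) (hg : Continuous g) {a b : ℝ} (hab : a ≤ b) :
    (∫ t in a..b, g t) ^ 2 ≤ (b - a) * ∫ t in a..b, g t ^ 2 := by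
  rcases eq_or_lt_of_le hab with rfl | hlt
  · simp
  have hgi : IntervalIntegrable g volume a b := hg.intervalIntegrable a b
  have hg2i : IntervalIntegrable (fun t => g t ^ 2) volume a b :=
    (hg.pow 2).intervalIntegrable a b
  set I := ∫ t in a..b, g t with hI
  set J := ∫ t in a..b, g t ^ 2 with hJ
  have key : 0 ≤ ∫ t in a..b, ((b - a) * g t - I) ^ 2 := by
    apply intervalIntegral.integral_nonneg hab
    intro t _; positivity
  have expand : ∫ t in a..b, ((b - a) * g t - I) ^ 2
      = (b - a) ^ 2 * J - 2 * (b - a) * I * I + I ^ 2 * (b - a) := by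
    have : ∀ t, ((b - a) * g t - I) ^ 2
        = (b - a) ^ 2 * g t ^ 2 - 2 * (b - a) * I * g t + I ^ 2 := by
      intro t; ring
    simp_rw [this]
    rw [intervalIntegral.integral_add, intervalIntegral.integral_sub,
      intervalIntegral.integral_const_mul, intervalIntegral.integral_const_mul,
      intervalIntegral.integral_const]
    · simp only [smul_eq_mul]; ring
    · exact hg2i.const_mul _
    · exact hgi.const_mul _
    · exact (hg2i.const_mul _).sub (hgi.const_mul _)
    · exact intervalIntegrable_const
  rw [expand] at key
  nlinarith [sq_nonneg (b - a), hlt]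

lemma ftc (f : ℝ → ℝ) (hf : ContDiff ℝ 1 f) (a b : ℝ) :
    ∫ t in a..b, deriv f t = f b - f a := by
  apply intervalIntegral.integral_deriv_eq_sub
  · intro x _; exact hf.differentiable one_ne_zero x
  · exact (hf.continuous_deriv le_rfl).intervalIntegrable a b

lemma diff_sq_le (f : ℝ → ℝ) (hf : ContDiff ℝ 1 f)
    (hi : Integrable (fun x => (deriv f x) ^ 2)) (x : ℝ) :
    (f x - f 0) ^ 2 ≤ |x| * ∫ y, (deriv f y) ^ 2 := by
  have hc : Continuous (deriv f) := hf.continuous_deriv le_rfl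
  have hnn : 0 ≤ᵐ[volume] fun y => (deriv f y) ^ 2 :=
    Filter.Eventually.of_forall fun y => sq_nonneg _
  rcases le_total 0 x with hx | hx
  · have h1 : f x - f 0 = ∫ t in (0:ℝ)..x, deriv f t := (ftc f hf 0 x).symm
    have h2 := cs_interval (deriv f) hc hx
    have h3 : ∫ t in (0:ℝ)..x, (deriv f t) ^ 2 ≤ ∫ y, (deriv f y) ^ 2 := by
      rw [intervalIntegral.integral_of_le hx]
      exact setIntegral_le_integral hi hnn
    rw [h1, abs_of_nonneg hx]
    calc (∫ t in (0:ℝ)..x, deriv f t) ^ 2 ≤ (x - 0) * ∫ t in (0:ℝ)..x, (deriv f t) ^ 2 := h2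
      _ ≤ x * ∫ y, (deriv f y) ^ 2 := by
          rw [sub_zero]
          exact mul_le_mul_of_nonneg_left h3 hx
  · have h1 : f 0 - f x = ∫ t in x..(0:ℝ), deriv f t := (ftc f hf x 0).symm
    have h2 := cs_interval (deriv f) hc hx
    have h3 : ∫ t in x..(0:ℝ), (deriv f t) ^ 2 ≤ ∫ y, (deriv f y) ^ 2 := by
      rw [intervalIntegral.integral_of_le hx]
      exact setIntegral_le_integral hi hnn
    have h4 : (f x - f 0) ^ 2 = (f 0 - f x) ^ 2 := by ring
    rw [h4, h1, abs_of_nonpos hx]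
    calc (∫ t in x..(0:ℝ), deriv f t) ^ 2 ≤ (0 - x) * ∫ t in x..(0:ℝ), (deriv f t) ^ 2 := h2
      _ ≤ -x * ∫ y, (deriv f y) ^ 2 := by
          rw [zero_sub]
          exact mul_le_mul_of_nonneg_left h3 (by linarith)

lemma f0_sq_le (f : ℝ → ℝ) (hf : ContDiff ℝ 1 f)
    (h1 : Integrable (fun x => (deriv f x) ^ 2))
    (h2 : Integrable (fun x => rho x * f x ^ 2)) :
    f 0 ^ 2 ≤ 4 * ((∫ y, (deriv f y) ^ 2) + ∫ y, rho y * f y ^ 2) := by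
  set I1 := ∫ y, (deriv f y) ^ 2 with hI1def
  set I2 := ∫ y, rho y * f y ^ 2 with hI2def
  have hI1 : 0 ≤ I1 := integral_nonneg fun y => sq_nonneg _
  have hI2 : 0 ≤ I2 := integral_nonneg fun y => mul_nonneg (rho_pos y).le (sq_nonneg _)
  have point : ∀ y ∈ Set.Icc (0:ℝ) 1,
      rho y * f 0 ^ 2 ≤ 2 * (rho y * f y ^ 2) + 2 * rho y * I1 := by
    intro y hy
    have hd : (f y - f 0) ^ 2 ≤ |y| * I1 := diff_sq_le f hf h1 y
    have hdy : (f y - f 0) ^ 2 ≤ I1 := by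
      calc (f y - f 0) ^ 2 ≤ |y| * I1 := hd
        _ ≤ 1 * I1 := by
            apply mul_le_mul_of_nonneg_right _ hI1
            rw [abs_of_nonneg hy.1]; exact hy.2
        _ = I1 := one_mul _
    have h4 : f 0 ^ 2 ≤ 2 * f y ^ 2 + 2 * I1 := by
      nlinarith [sq_nonneg (f y + (f y - f 0))]
    nlinarith [(rho_pos y).le, mul_le_mul_of_nonneg_left h4 (rho_pos y).le]
  have contR : Continuous fun y => rho y * f 0 ^ 2 := rho_continuous.mul continuous_const
  have contRHS : Continuous fun y => 2 * (rho y * f y ^ 2) + 2 * rho y * I1 :=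
    ((continuous_const.mul (rho_continuous.mul (hf.continuous.pow 2))).add
      ((continuous_const.mul rho_continuous).mul continuous_const))
  have int1 : ∫ y in Set.Icc (0:ℝ) 1, rho y * f 0 ^ 2
      ≤ ∫ y in Set.Icc (0:ℝ) 1, (2 * (rho y * f y ^ 2) + 2 * rho y * I1) :=
    setIntegral_mono_on contR.integrableOn_Icc contRHS.integrableOn_Icc measurableSet_Icc point
  have lb : rho 1 * f 0 ^ 2 ≤ ∫ y in Set.Icc (0:ℝ) 1, rho y * f 0 ^ 2 := by
    have hpt : ∀ y ∈ Set.Icc (0:ℝ) 1, rho 1 * f 0 ^ 2 ≤ rho y * f 0 ^ 2 := by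
      intro y hy
      have hmono : rho 1 ≤ rho y := by
        rw [rho, rho]
        apply inv_anti₀ (Real.cosh_pos y)
        rw [Real.cosh_le_cosh, abs_of_nonneg hy.1, abs_one]
        exact hy.2
      exact mul_le_mul_of_nonneg_right hmono (sq_nonneg _)
    calc rho 1 * f 0 ^ 2 = ∫ _ in Set.Icc (0:ℝ) 1, rho 1 * f 0 ^ 2 := by
          rw [setIntegral_const]
          simp [Real.volume_Icc]
      _ ≤ _ := setIntegral_mono_on
          (integrableOn_const measure_Icc_lt_top.ne)
          contR.integrableOn_Icc measurableSet_Icc hpt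
  have ubA : ∫ y in Set.Icc (0:ℝ) 1, 2 * (rho y * f y ^ 2) ≤ 2 * I2 := by
    rw [integral_const_mul]
    have := setIntegral_le_integral (s := Set.Icc (0:ℝ) 1) h2
      (Filter.Eventually.of_forall fun y => mul_nonneg (rho_pos y).le (sq_nonneg _))
    linarith
  have ubB : ∫ y in Set.Icc (0:ℝ) 1, 2 * rho y * I1 ≤ 2 * I1 := by
    have hpt : ∀ y ∈ Set.Icc (0:ℝ) 1, 2 * rho y * I1 ≤ 2 * I1 := by
      intro y _
      have := rho_le_one y
      have := (rho_pos y).le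
      nlinarith
    calc ∫ y in Set.Icc (0:ℝ) 1, 2 * rho y * I1
        ≤ ∫ _ in Set.Icc (0:ℝ) 1, 2 * I1 := setIntegral_mono_on
          (((continuous_const.mul rho_continuous).mul continuous_const).integrableOn_Icc)
          (integrableOn_const measure_Icc_lt_top.ne) measurableSet_Icc hpt
      _ = 2 * I1 := by rw [setIntegral_const]; simp [Real.volume_Icc]
  have ub : ∫ y in Set.Icc (0:ℝ) 1, (2 * (rho y * f y ^ 2) + 2 * rho y * I1)
      ≤ 2 * I2 + 2 * I1 := by
    rw [integral_add]
    · exact add_le_add ubA ubB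
    · exact (continuous_const.mul (rho_continuous.mul (hf.continuous.pow 2))).integrableOn_Icc
    · exact ((continuous_const.mul rho_continuous).mul continuous_const).integrableOn_Icc
  have hrho1 : (2:ℝ)⁻¹ ≤ rho 1 := by
    rw [rho]
    apply inv_anti₀ (Real.cosh_pos 1)
    rw [Real.cosh_eq]
    have he1 : Real.exp 1 < 2.7182818286 := Real.exp_one_lt_d9
    have he2 : Real.exp (-1) < 1 := Real.exp_lt_one_iff.mpr (by norm_num)
    linarith
  nlinarith [sq_nonneg (f 0), lb, int1, ub, hrho1]

lemma sqrt_exp_bound (κ : ℝ) (hκ : 0 < κ) (t : ℝ) (ht : 0 ≤ t) :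
    Real.sqrt t * Real.exp (-(κ * t)) ≤ 1 / Real.sqrt κ := by
  have hrκ : 0 < Real.sqrt κ := Real.sqrt_pos.mpr hκ
  rcases le_total t (1 / κ) with h | h
  · calc Real.sqrt t * Real.exp (-(κ * t))
        ≤ Real.sqrt (1 / κ) * 1 := by
          apply mul_le_mul (Real.sqrt_le_sqrt h) _ (Real.exp_pos _).le (Real.sqrt_nonneg _)
          rw [Real.exp_le_one_iff]
          nlinarith
      _ = 1 / Real.sqrt κ := by
          rw [mul_one, one_div, one_div, Real.sqrt_inv]
  · have ht0 : 0 < t := lt_of_lt_of_le (by positivity) h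
    have hs : Real.sqrt t ^ 2 = t := Real.sq_sqrt ht0.le
    have hspos : 0 < Real.sqrt t := Real.sqrt_pos.mpr ht0
    have hexp : Real.exp (-(κ * t)) ≤ (κ * t)⁻¹ := by
      rw [Real.exp_neg]
      apply inv_anti₀ (by positivity)
      linarith [Real.add_one_le_exp (κ * t)]
    have hsge : 1 / Real.sqrt κ ≤ Real.sqrt t := by
      rw [one_div, ← Real.sqrt_inv, ← one_div]
      exact Real.sqrt_le_sqrt h
    calc Real.sqrt t * Real.exp (-(κ * t))
        ≤ Real.sqrt t * (κ * t)⁻¹ := mul_le_mul_of_nonneg_left hexp hspos.le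
      _ = 1 / (κ * Real.sqrt t) := by
          field_simp; exact hs
      _ ≤ 1 / Real.sqrt κ := by
          rw [div_le_div_iff₀ (by positivity) hrκ]
          have hκs : Real.sqrt κ ^ 2 = κ := Real.sq_sqrt hκ.le
          have hsge' : 1 ≤ Real.sqrt t * Real.sqrt κ := by
            rw [div_le_iff₀ hrκ] at hsge
            linarith
          nlinarith [hrκ.le, hspos.le]

/-- Weighted Sobolev-type bound: `‖f ρ^κ‖_{L^∞} ≲ (∫ (f')² + ∫ ρ f²)^{1/2}`. -/
theorem weighted_sup_bound (κ : ℝ) (hκ : 0 < κ) :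
    ∃ C > 0, ∀ f : ℝ → ℝ, ContDiff ℝ 1 f →
      Integrable (fun x => (deriv f x) ^ 2) →
      Integrable (fun x => rho x * f x ^ 2) →
      ∀ x, |f x| * rho x ^ κ
        ≤ C * Real.sqrt ((∫ y, (deriv f y) ^ 2) + ∫ y, rho y * f y ^ 2) := by
  have hrκ : 0 < Real.sqrt κ := Real.sqrt_pos.mpr hκ
  refine ⟨2 + (2:ℝ) ^ κ / Real.sqrt κ, by positivity, ?_⟩
  intro f hf h1 h2 x
  set I1 := ∫ y, (deriv f y) ^ 2 with hI1def
  set I2 := ∫ y, rho y * f y ^ 2 with hI2def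
  have hI1 : 0 ≤ I1 := integral_nonneg fun y => sq_nonneg _
  have hI2 : 0 ≤ I2 := integral_nonneg fun y => mul_nonneg (rho_pos y).le (sq_nonneg _)
  set S := Real.sqrt (I1 + I2) with hSdef
  have hS : 0 ≤ S := Real.sqrt_nonneg _
  have hf0 : |f 0| ≤ 2 * S := by
    rw [← Real.sqrt_sq_eq_abs]
    calc Real.sqrt (f 0 ^ 2) ≤ Real.sqrt (4 * (I1 + I2)) :=
        Real.sqrt_le_sqrt (f0_sq_le f hf h1 h2)
      _ = 2 * S := by
          rw [show (4:ℝ) * (I1 + I2) = 2 ^ 2 * (I1 + I2) by norm_num,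
            Real.sqrt_mul (by positivity), Real.sqrt_sq (by norm_num)]
  have hdiff : |f x - f 0| ≤ Real.sqrt |x| * Real.sqrt I1 := by
    rw [← Real.sqrt_sq_eq_abs, ← Real.sqrt_mul (abs_nonneg x)]
    exact Real.sqrt_le_sqrt (diff_sq_le f hf h1 x)
  have hρκ0 : 0 ≤ rho x ^ κ := Real.rpow_nonneg (rho_pos x).le κ
  have hρκ1 : rho x ^ κ ≤ 1 := Real.rpow_le_one (rho_pos x).le (rho_le_one x) hκ.le
  have hρκ : rho x ^ κ ≤ (2:ℝ) ^ κ * Real.exp (-(κ * |x|)) := by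
    calc rho x ^ κ ≤ (2 * Real.exp (-|x|)) ^ κ :=
        Real.rpow_le_rpow (rho_pos x).le (rho_le_exp x) hκ.le
      _ = (2:ℝ) ^ κ * Real.exp (-(κ * |x|)) := by
          rw [Real.mul_rpow (by norm_num) (Real.exp_pos _).le, ← Real.exp_mul]
          ring_nf
  have hsq : Real.sqrt |x| * Real.exp (-(κ * |x|)) ≤ 1 / Real.sqrt κ :=
    sqrt_exp_bound κ hκ |x| (abs_nonneg x)
  have hI1S : Real.sqrt I1 ≤ S := Real.sqrt_le_sqrt (by linarith)
  have habs : |f x| ≤ |f 0| + |f x - f 0| := by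
    calc |f x| = |f 0 + (f x - f 0)| := by congr 1; ring
      _ ≤ _ := abs_add_le _ _
  have h2κ : (0:ℝ) ≤ (2:ℝ) ^ κ := Real.rpow_nonneg (by norm_num) κ
  calc |f x| * rho x ^ κ
      ≤ (|f 0| + |f x - f 0|) * rho x ^ κ := mul_le_mul_of_nonneg_right habs hρκ0
    _ = |f 0| * rho x ^ κ + |f x - f 0| * rho x ^ κ := by ring
    _ ≤ (2 * S) * 1 + (Real.sqrt |x| * Real.sqrt I1) * ((2:ℝ) ^ κ * Real.exp (-(κ * |x|))) := by
        apply add_le_add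
        · exact mul_le_mul hf0 hρκ1 hρκ0 (by positivity)
        · exact mul_le_mul hdiff hρκ hρκ0 (by positivity)
    _ = 2 * S + (2:ℝ) ^ κ * (Real.sqrt |x| * Real.exp (-(κ * |x|))) * Real.sqrt I1 := by ring
    _ ≤ 2 * S + (2:ℝ) ^ κ * (1 / Real.sqrt κ) * S := by
        apply add_le_add_right
        apply mul_le_mul _ hI1S (Real.sqrt_nonneg _) (by positivity)
        exact mul_le_mul_of_nonneg_left hsq h2κ
    _ = (2 + (2:ℝ) ^ κ / Real.sqrt κ) * S := by ring
end

section
/- Let c ∈ (−√2, √2) and β = √(2 − c²). For every w1 ∈ L²(ℝ; ℝ) and every twice continuously differentiable w2 : ℝ → ℝ with ∂_x w2 ∈ L² and ∂_x² w2 ∈ L², one has ∫_ℝ (w1 − 2c·∂_x w2)² + β²·∫_ℝ (∂_x w2)² + 3·∫_ℝ (∂_x² w2)² ≥ (β²/16)·( ∫_ℝ w1² + ∫_ℝ (∂_x w2)² + ∫_ℝ (∂_x² w2)² ). -/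
open Real MeasureTheory

/-- Coercivity of the quadratic form in the virial identity:
`∫ (w₁ - 2c ∂ₓw₂)² + β² ∫ (∂ₓw₂)² + 3 ∫ (∂ₓ²w₂)²
  ≥ (β²/16) (∫ w₁² + ∫ (∂ₓw₂)² + ∫ (∂ₓ²w₂)²)`. -/
theorem virial_coercivity (c : ℝ)
    (hc : c ∈ Set.Ioo (-Real.sqrt 2) (Real.sqrt 2))
    (w1 : ℝ → ℝ) (hw1 : MeasureTheory.MemLp w1 2 (volume : Measure ℝ))
    (w2 : ℝ → ℝ) (hw2 : ContDiff ℝ 2 w2)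
    (hw2' : MeasureTheory.MemLp (deriv w2) 2 (volume : Measure ℝ))
    (hw2'' : MeasureTheory.MemLp (deriv (deriv w2)) 2 (volume : Measure ℝ)) :
    (∫ x, (w1 x - 2 * c * deriv w2 x) ^ 2)
      + (Real.sqrt (2 - c ^ 2)) ^ 2 * (∫ x, (deriv w2 x) ^ 2)
      + 3 * (∫ x, (deriv (deriv w2) x) ^ 2)
    ≥ (Real.sqrt (2 - c ^ 2)) ^ 2 / 16
      * ((∫ x, (w1 x) ^ 2) + (∫ x, (deriv w2 x) ^ 2)
        + ∫ x, (deriv (deriv w2) x) ^ 2) := by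
  have hc2 : c ^ 2 < 2 := by
    have h1 := hc.1
    have h2 := hc.2
    have := Real.sq_sqrt (by norm_num : (2:ℝ) ≥ 0)
    nlinarith [Real.sqrt_nonneg 2]
  have hβ : (Real.sqrt (2 - c ^ 2)) ^ 2 = 2 - c ^ 2 :=
    Real.sq_sqrt (by linarith)
  -- integrability of the squares
  have h1 : Integrable (fun x => (w1 x) ^ 2) volume := hw1.integrable_sq
  have h2 : Integrable (fun x => (deriv w2 x) ^ 2) volume := hw2'.integrable_sq
  have h3 : Integrable (fun x => (deriv (deriv w2) x) ^ 2) volume := hw2''.integrable_sq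
  have hfm : MemLp (fun x => w1 x - 2 * c * deriv w2 x) 2 (volume : Measure ℝ) :=
    hw1.sub (hw2'.const_mul (2 * c))
  have h4 : Integrable (fun x => (w1 x - 2 * c * deriv w2 x) ^ 2) volume :=
    hfm.integrable_sq
  -- pointwise inequality
  have key : ∀ x : ℝ,
      (2 - c ^ 2) / 16 * ((w1 x) ^ 2 + (deriv w2 x) ^ 2 + (deriv (deriv w2) x) ^ 2)
        ≤ (w1 x - 2 * c * deriv w2 x) ^ 2 + (2 - c ^ 2) * (deriv w2 x) ^ 2
          + 3 * (deriv (deriv w2) x) ^ 2 := by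
    intro x
    set a := w1 x
    set b := deriv w2 x
    set u := deriv (deriv w2) x
    have hu : (0:ℝ) ≤ (46 + c ^ 2) * u ^ 2 := by positivity
    have hb : (0:ℝ) ≤ (2 - c ^ 2) * (30 - 7 * c ^ 2) * b ^ 2 := by
      apply mul_nonneg
      · nlinarith
      · exact sq_nonneg b
    nlinarith [sq_nonneg ((14 + c ^ 2) * a - 32 * c * b), sq_nonneg a, sq_nonneg b,
      sq_nonneg u, sq_nonneg c]
  -- integrate
  have hR : Integrable (fun x => (2 - c ^ 2) / 16 *
      ((w1 x) ^ 2 + (deriv w2 x) ^ 2 + (deriv (deriv w2) x) ^ 2)) volume :=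
    ((h1.add h2).add h3).const_mul _
  have hL : Integrable (fun x => (w1 x - 2 * c * deriv w2 x) ^ 2
      + (2 - c ^ 2) * (deriv w2 x) ^ 2 + 3 * (deriv (deriv w2) x) ^ 2) volume :=
    (h4.add (h2.const_mul _)).add (h3.const_mul _)
  have hmono : (∫ x, (2 - c ^ 2) / 16 *
        ((w1 x) ^ 2 + (deriv w2 x) ^ 2 + (deriv (deriv w2) x) ^ 2))
      ≤ ∫ x, ((w1 x - 2 * c * deriv w2 x) ^ 2 + (2 - c ^ 2) * (deriv w2 x) ^ 2
        + 3 * (deriv (deriv w2) x) ^ 2) := integral_mono hR hL key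
  have eL : (∫ x, ((w1 x - 2 * c * deriv w2 x) ^ 2 + (2 - c ^ 2) * (deriv w2 x) ^ 2
        + 3 * (deriv (deriv w2) x) ^ 2))
      = (∫ x, (w1 x - 2 * c * deriv w2 x) ^ 2)
        + (2 - c ^ 2) * (∫ x, (deriv w2 x) ^ 2)
        + 3 * (∫ x, (deriv (deriv w2) x) ^ 2) := by
    have hA : Integrable (fun x => (w1 x - 2 * c * deriv w2 x) ^ 2
        + (2 - c ^ 2) * (deriv w2 x) ^ 2) volume := h4.add (h2.const_mul _)
    have hB : Integrable (fun x => (3:ℝ) * (deriv (deriv w2) x) ^ 2) volume :=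
      h3.const_mul _
    rw [integral_add hA hB, integral_add h4 (h2.const_mul _),
      integral_const_mul, integral_const_mul]
  have eR : (∫ x, (2 - c ^ 2) / 16 *
        ((w1 x) ^ 2 + (deriv w2 x) ^ 2 + (deriv (deriv w2) x) ^ 2))
      = (2 - c ^ 2) / 16 * ((∫ x, (w1 x) ^ 2) + (∫ x, (deriv w2 x) ^ 2)
        + ∫ x, (deriv (deriv w2) x) ^ 2) := by
    have hA : Integrable (fun x => (w1 x) ^ 2 + (deriv w2 x) ^ 2) volume := h1.add h2
    rw [integral_const_mul, integral_add hA h3, integral_add h1 h2]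
  rw [hβ, ge_iff_le]
  rw [eL, eR] at hmono
  exact hmono
end
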